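/- Let T be an odd positive integer, c an integer with c ≥ 0, α, ρ real with |α| < 1/2 and |ρ| ≤ (T−1)/(2T), and γ real with 0 < γ ≤ T. There is a constant C = C(c,T,α) > 0 such that for every integer k ≥ 1 and every z ∈ ℂ with Re z > 0 and Re(1/z) ≥ k/2: |𝓗_{c,T}(α,γ,ρ,k;z)| ≤ C. -/

import Mathlib

open Complex Real

/-- `𝓗_{c,T}(α,γ,ρ,k;z) = ∫_ℝ (x+iρ)^c·e^{−πTx²/(γ²kz)+2πxα}/cosh(π(x+iρ)) dx`. -/
noncomputable def mordellH' (T c : ℕ) (α γ ρ : ℝ) (k : ℕ) (z : ℂ) : ℂ :=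
  ∫ x : ℝ, ((x : ℂ) + I * ρ) ^ c *
      Complex.exp (-(π : ℂ) * T * x ^ 2 / (γ ^ 2 * k * z) + 2 * π * x * α) /
    Complex.cosh (π * ((x : ℂ) + I * ρ))

set_option maxHeartbeats 1000000 in
private lemma mordellH'_pointwise (T : ℕ) (hTpos : 0 < T) (c : ℕ) (α : ℝ) (hα : |α| < 1 / 2)
    (ρ : ℝ) (hρ : |ρ| ≤ ((T : ℝ) - 1) / (2 * T)) (γ : ℝ) (hγ : 0 < γ) (hγT : γ ≤ T)
    (k : ℕ) (hk : 1 ≤ k) (z : ℂ) (hzre : 0 < z.re) (hz2 : (k : ℝ) / 2 ≤ (1 / z).re) (x : ℝ) :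
    ‖((x : ℂ) + I * ρ) ^ c *
      Complex.exp (-(π : ℂ) * T * x ^ 2 / (γ ^ 2 * k * z) + 2 * π * x * α) /
      Complex.cosh (π * ((x : ℂ) + I * ρ))‖ ≤
    Real.exp (((c : ℝ) + π) ^ 2 * T / π) / Real.sin (π / (2 * T)) *
      Real.exp (-(π / (4 * T)) * x ^ 2) := by
  have hπ := Real.pi_pos
  have hT1 : (1 : ℝ) ≤ T := by exact_mod_cast hTpos
  have hTr : (0 : ℝ) < T := by positivity
  set s : ℝ := Real.sin (π / (2 * T)) with hs_def
  have hs : 0 < s := by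
    apply Real.sin_pos_of_pos_of_lt_pi
    · positivity
    · rw [div_lt_iff₀ (by positivity)]
      nlinarith
  set K : ℝ := Real.exp (((c : ℝ) + π) ^ 2 * T / π) with hK_def
  have hkr : (0 : ℝ) < k := by exact_mod_cast hk
  have hzne : z ≠ 0 := fun h => by simp [h] at hzre
  have hρ1 : |ρ| ≤ 1 := by
    refine hρ.trans ?_
    rw [div_le_one (by positivity)]
    nlinarith
  -- base bound
  have h1 : ‖(x : ℂ) + I * ρ‖ ≤ |x| + 1 := by
    refine (norm_add_le _ _).trans ?_
    simp [Complex.norm_real]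
    linarith [hρ1]
  -- exponent real part bound
  have hE : (-(π : ℂ) * T * x ^ 2 / (γ ^ 2 * k * z) + 2 * π * x * α) =
      ((-(π * T * x ^ 2) / (γ ^ 2 * k) : ℝ) : ℂ) * (1 / z) + ((2 * π * x * α : ℝ) : ℂ) := by
    have hγ' : (γ : ℂ) ≠ 0 := by exact_mod_cast hγ.ne'
    have hk' : (k : ℂ) ≠ 0 := by exact_mod_cast hkr.ne'
    push_cast
    field_simp
  have h2 : (-(π : ℂ) * T * x ^ 2 / (γ ^ 2 * k * z) + 2 * π * x * α).re ≤
      -(π * x ^ 2) / (2 * T) + π * |x| := by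
    rw [hE]
    simp only [Complex.add_re, Complex.re_ofReal_mul, Complex.ofReal_re]
    have hcoef : -(π * T * x ^ 2) / (γ ^ 2 * k) ≤ 0 := by
      rw [neg_div]
      simp only [neg_nonpos]
      positivity
    have hmul : -(π * T * x ^ 2) / (γ ^ 2 * k) * (1 / z).re ≤
        -(π * T * x ^ 2) / (γ ^ 2 * k) * ((k : ℝ) / 2) :=
      mul_le_mul_of_nonpos_left hz2 hcoef
    have heq : -(π * T * x ^ 2) / (γ ^ 2 * k) * ((k : ℝ) / 2) =
        -(π * T * x ^ 2) / (2 * γ ^ 2) := by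
      field_simp
    rw [heq] at hmul
    have hT2 : -(π * T * x ^ 2) / (2 * γ ^ 2) ≤ -(π * x ^ 2) / (2 * T) := by
      rw [neg_div, neg_div, neg_le_neg_iff]
      rw [div_le_div_iff₀ (by positivity) (by positivity)]
      nlinarith [sq_nonneg x, mul_nonneg (mul_nonneg hπ.le (sq_nonneg x)) (sub_nonneg.2 hγT)]
    have hα2 : 2 * π * x * α ≤ π * |x| := by
      have h₁ : x * α ≤ |x| * |α| := (le_abs_self _).trans (abs_mul x α).le
      have h₂ : x * α ≤ |x| / 2 := by
        nlinarith [mul_nonneg (abs_nonneg x) (by linarith : (0:ℝ) ≤ 1/2 - |α|)]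
      nlinarith [mul_le_mul_of_nonneg_left h₂ (by positivity : (0:ℝ) ≤ 2 * π)]
    linarith [hmul, hT2, hα2]
  -- cosh lower bound
  have h3 : s ≤ ‖Complex.cosh ((π : ℂ) * ((x : ℂ) + I * ρ))‖ := by
    have harg : (π : ℂ) * ((x : ℂ) + I * ρ) = ((π * x : ℝ) : ℂ) + ((π * ρ : ℝ) : ℂ) * I := by
      push_cast; ring
    have hc : Complex.cosh ((π : ℂ) * ((x : ℂ) + I * ρ)) =
        ((Real.cosh (π * x) * Real.cos (π * ρ) : ℝ) : ℂ) +
        ((Real.sinh (π * x) * Real.sin (π * ρ) : ℝ) : ℂ) * I := by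
      rw [harg, Complex.cosh_add, Complex.cosh_mul_I, Complex.sinh_mul_I,
        ← Complex.ofReal_cosh, ← Complex.ofReal_cos, ← Complex.ofReal_sinh,
        ← Complex.ofReal_sin, Complex.ofReal_mul, Complex.ofReal_mul]
      ring
    have hre : (Complex.cosh ((π : ℂ) * ((x : ℂ) + I * ρ))).re =
        Real.cosh (π * x) * Real.cos (π * ρ) := by
      rw [hc]
      simp only [Complex.add_re, Complex.mul_re, Complex.ofReal_re, Complex.ofReal_im,
        Complex.I_re, Complex.I_im, mul_zero, zero_mul, mul_one, sub_zero, add_zero,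
        zero_add, neg_zero, zero_sub]
    have hcos : s ≤ Real.cos (π * ρ) := by
      have h0 : Real.cos (π * ρ) = Real.cos (π * |ρ|) := by
        rcases abs_cases ρ with ⟨h, _⟩ | ⟨h, _⟩
        · rw [h]
        · rw [h, mul_neg, Real.cos_neg]
      rw [hs_def, ← Real.cos_pi_div_two_sub, h0]
      apply Real.cos_le_cos_of_nonneg_of_le_pi
      · positivity
      · have h6 : 0 < π / (2 * (T : ℝ)) := by positivity
        linarith
      · have h5 : π * |ρ| ≤ π * (((T : ℝ) - 1) / (2 * T)) :=
          mul_le_mul_of_nonneg_left hρ hπ.le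
        have heq2 : π * (((T : ℝ) - 1) / (2 * T)) = π / 2 - π / (2 * T) := by
          field_simp
        linarith [h5, heq2]
    have hcosh := Real.one_le_cosh (π * x)
    have hcosnn : 0 ≤ Real.cos (π * ρ) := le_trans hs.le hcos
    calc s ≤ Real.cos (π * ρ) := hcos
      _ ≤ Real.cosh (π * x) * Real.cos (π * ρ) := le_mul_of_one_le_left hcosnn hcosh
      _ = (Complex.cosh ((π : ℂ) * ((x : ℂ) + I * ρ))).re := hre.symm
      _ ≤ |(Complex.cosh ((π : ℂ) * ((x : ℂ) + I * ρ))).re| := le_abs_self _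
      _ ≤ ‖Complex.cosh ((π : ℂ) * ((x : ℂ) + I * ρ))‖ := Complex.abs_re_le_norm _
  -- assemble
  rw [norm_div, norm_mul, norm_pow,
    Complex.norm_exp]
  have step1 : ‖(x : ℂ) + I * ρ‖ ^ c *
      Real.exp ((-(π : ℂ) * T * x ^ 2 / (γ ^ 2 * k * z) + 2 * π * x * α).re) /
      ‖Complex.cosh ((π : ℂ) * ((x : ℂ) + I * ρ))‖ ≤
      (|x| + 1) ^ c * Real.exp (-(π * x ^ 2) / (2 * T) + π * |x|) / s := by
    apply div_le_div₀ (by positivity)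
    · exact mul_le_mul (pow_le_pow_left₀ (norm_nonneg _) h1 c)
        (Real.exp_le_exp.2 h2) (Real.exp_pos _).le (by positivity)
    · exact hs
    · exact h3
  refine step1.trans ?_
  rw [div_mul_eq_mul_div, div_le_div_iff₀ hs hs]
  have hcore : (|x| + 1) ^ c * Real.exp (-(π * x ^ 2) / (2 * T) + π * |x|) ≤
      K * Real.exp (-(π / (4 * T)) * x ^ 2) := by
    have hp : (|x| + 1) ^ c ≤ Real.exp ((c : ℝ) * |x|) := by
      calc (|x| + 1) ^ c ≤ Real.exp |x| ^ c := by
            apply pow_le_pow_left₀ (by positivity)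
            linarith [Real.add_one_le_exp |x|]
        _ = Real.exp ((c : ℝ) * |x|) := (Real.exp_nat_mul |x| c).symm
    calc (|x| + 1) ^ c * Real.exp (-(π * x ^ 2) / (2 * T) + π * |x|)
        ≤ Real.exp ((c : ℝ) * |x|) * Real.exp (-(π * x ^ 2) / (2 * T) + π * |x|) :=
          mul_le_mul_of_nonneg_right hp (Real.exp_pos _).le
      _ = Real.exp ((c : ℝ) * |x| + (-(π * x ^ 2) / (2 * T) + π * |x|)) := by
          rw [← Real.exp_add]
      _ ≤ K * Real.exp (-(π / (4 * T)) * x ^ 2) := by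
          rw [hK_def, ← Real.exp_add, Real.exp_le_exp]
          have h3' : π / (4 * T) * |x| ^ 2 + ((c : ℝ) + π) ^ 2 * T / π =
              (π ^ 2 * |x| ^ 2 + 4 * T ^ 2 * ((c : ℝ) + π) ^ 2) / (4 * T * π) := by
            field_simp
          have h4 : ((c : ℝ) + π) * |x| ≤
              (π ^ 2 * |x| ^ 2 + 4 * T ^ 2 * ((c : ℝ) + π) ^ 2) / (4 * T * π) := by
            rw [le_div_iff₀ (by positivity)]
            nlinarith [sq_nonneg (π * |x| - 2 * T * ((c : ℝ) + π))]
          rw [← h3', _root_.sq_abs] at h4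
          have hsplit : -(π * x ^ 2) / (2 * T) =
              -(π / (4 * T) * x ^ 2) - π / (4 * T) * x ^ 2 := by
            field_simp; ring
          linarith [h4, hsplit]
  exact mul_le_mul_of_nonneg_right hcore hs.le

/-- `𝓗_{c,T}(α,γ,ρ,k;z)` is bounded by a constant depending only on `c`, `T`, `α`. -/
theorem H_bounded (T : ℕ) (hT : Odd T) (hTpos : 0 < T) (c : ℕ)
    (α : ℝ) (hα : |α| < 1 / 2) :
    ∃ C > 0, ∀ ρ : ℝ, |ρ| ≤ ((T : ℝ) - 1) / (2 * T) →
      ∀ γ : ℝ, 0 < γ → γ ≤ T →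
      ∀ k : ℕ, 1 ≤ k → ∀ z : ℂ, 0 < z.re → (k : ℝ) / 2 ≤ (1 / z).re →
        ‖mordellH' T c α γ ρ k z‖ ≤ C := by
  have hπ := Real.pi_pos
  have hTr : (0 : ℝ) < T := by exact_mod_cast hTpos
  set bnd : ℝ → ℝ := fun x => Real.exp (((c : ℝ) + π) ^ 2 * T / π) / Real.sin (π / (2 * T)) *
      Real.exp (-(π / (4 * T)) * x ^ 2) with hbnd_def
  have hbnd_int : MeasureTheory.Integrable bnd :=
    (integrable_exp_neg_mul_sq (by positivity : (0:ℝ) < π / (4 * T))).const_mul _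
  have hs : 0 < Real.sin (π / (2 * T)) := by
    apply Real.sin_pos_of_pos_of_lt_pi
    · positivity
    · rw [div_lt_iff₀ (by positivity)]
      have : (1 : ℝ) ≤ T := by exact_mod_cast hTpos
      nlinarith
  have hint_nn : 0 ≤ ∫ x : ℝ, bnd x :=
    MeasureTheory.integral_nonneg fun x =>
      mul_nonneg (div_nonneg (Real.exp_pos _).le hs.le) (Real.exp_pos _).le
  refine ⟨(∫ x : ℝ, bnd x) + 1, ?_, ?_⟩
  · linarith
  intro ρ hρ γ hγ hγT k hk z hzre hz2
  rw [mordellH']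
  refine le_trans (MeasureTheory.norm_integral_le_integral_norm _) ?_
  refine le_trans ?_ (by linarith : (∫ x : ℝ, bnd x) ≤ (∫ x : ℝ, bnd x) + 1)
  apply MeasureTheory.integral_mono_of_nonneg
  · exact Filter.Eventually.of_forall fun x => norm_nonneg _
  · exact hbnd_int
  · exact Filter.Eventually.of_forall fun x =>
      mordellH'_pointwise T hTpos c α hα ρ hρ γ hγ hγT k hk z hzre hz2 x
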